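/- Let S : (0, ∞) → ℝ be measurable, and suppose there exist constants C > 0, c > 0 with |S(t)| ≤ C·e^{−c/t} for all t ∈ (0, 1] and |S(t) − 1| ≤ C·e^{−c·t} for all t ≥ 1. Then, as κ → 0⁺, ∫_0^∞ e^{−κt}·S(t)/t dt + log κ converges to ∫_0^1 S(t)/t dt + ∫_1^∞ (S(t) − 1)/t dt − γ_EM, where γ_EM is the Euler–Mascheroni constant. -/

import Mathlib

open Real MeasureTheory Filter

open Set

lemma aux_int_log : IntegrableOn (fun t => Real.log t * Real.exp (-t)) (Ioi (0:ℝ)) := by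
  have h01 : IntegrableOn (fun t => Real.log t * Real.exp (-t)) (Ioc (0:ℝ) 1) := by
    have hb : IntegrableOn (fun t => 2 * t ^ (-(1/2) : ℝ)) (Ioc (0:ℝ) 1) := by
      have := (intervalIntegral.intervalIntegrable_rpow' (a := 0) (b := 1)
        (r := -(1/2)) (by norm_num)).const_mul 2
      rwa [intervalIntegrable_iff_integrableOn_Ioc_of_le zero_le_one] at this
    refine Integrable.mono' hb ?_ ?_
    · refine ContinuousOn.aestronglyMeasurable ?_ measurableSet_Ioc
      exact ((Real.continuousOn_log.mono (by intro x hx; exact ne_of_gt hx.1)).mul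
        (Real.continuous_exp.comp continuous_neg).continuousOn)
    · filter_upwards [ae_restrict_mem measurableSet_Ioc] with t ht
      have ht0 : 0 < t := ht.1
      have hle : |Real.log t| ≤ 2 * t ^ (-(1/2) : ℝ) := by
        rw [abs_of_nonpos (Real.log_nonpos ht0.le ht.2)]
        have : -Real.log t = 2 * Real.log (t ^ (-(1/2) : ℝ)) := by
          rw [Real.log_rpow ht0]; ring
        rw [this]
        have hpos : (0:ℝ) < t ^ (-(1/2) : ℝ) := Real.rpow_pos_of_pos ht0 _
        nlinarith [Real.log_le_sub_one_of_pos hpos]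
      calc ‖Real.log t * Real.exp (-t)‖ = |Real.log t| * Real.exp (-t) := by
            rw [norm_mul, Real.norm_eq_abs, Real.norm_eq_abs, abs_of_pos (Real.exp_pos _)]
        _ ≤ |Real.log t| * 1 := by
            exact mul_le_mul_of_nonneg_left (Real.exp_le_one_iff.2 (by linarith)) (abs_nonneg _)
        _ ≤ 2 * t ^ (-(1/2) : ℝ) := by rw [mul_one]; exact hle
  have h1i : IntegrableOn (fun t => Real.log t * Real.exp (-t)) (Ioi (1:ℝ)) := by
    have hb : IntegrableOn (fun t : ℝ => Real.exp (-t) * t ^ ((2:ℝ) - 1)) (Ioi (1:ℝ)) :=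
      (Real.GammaIntegral_convergent (by norm_num : (0:ℝ) < 2)).mono_set
        (Ioi_subset_Ioi zero_le_one)
    refine Integrable.mono' hb ?_ ?_
    · refine ContinuousOn.aestronglyMeasurable ?_ measurableSet_Ioi
      exact ((Real.continuousOn_log.mono (by intro x hx; exact ne_of_gt (lt_trans zero_lt_one hx))).mul
        (Real.continuous_exp.comp continuous_neg).continuousOn)
    · filter_upwards [ae_restrict_mem measurableSet_Ioi] with t ht
      have ht1 : (1:ℝ) ≤ t := le_of_lt ht
      have h0 : (0:ℝ) ≤ Real.log t := Real.log_nonneg ht1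
      have hlt : Real.log t ≤ t := by
        have := Real.log_le_sub_one_of_pos (by linarith : (0:ℝ) < t); linarith
      rw [norm_mul, Real.norm_eq_abs, Real.norm_eq_abs, abs_of_nonneg h0,
        abs_of_pos (Real.exp_pos _)]
      rw [show ((2:ℝ) - 1) = 1 by norm_num, Real.rpow_one, mul_comm (Real.exp (-t)) t]
      exact mul_le_mul_of_nonneg_right hlt (Real.exp_pos _).le
  have : Ioc (0:ℝ) 1 ∪ Ioi 1 = Ioi 0 := Ioc_union_Ioi_eq_Ioi zero_le_one
  rw [← this]
  exact h01.union h1i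

lemma int_log_exp :
    (∫ t in Ioi (0:ℝ), Real.log t * Real.exp (-t)) = -Real.eulerMascheroniConstant := by
  set d : ℝ := ∫ t in Ioi (0:ℝ), Real.log t * Real.exp (-t) with hd
  have h0 : HasDerivAt Complex.GammaIntegral
      (∫ t : ℝ in Ioi 0, (t:ℂ) ^ ((1:ℂ) - 1) * (Real.log t * Real.exp (-t))) 1 :=
    Complex.hasDerivAt_GammaIntegral (by norm_num)
  have h0' : HasDerivAt Complex.GammaIntegral ((d : ℂ)) 1 := by
    convert h0 using 1
    have heq : (∫ t : ℝ in Ioi 0, (t:ℂ) ^ ((1:ℂ)-1) * (Real.log t * Real.exp (-t)))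
        = ∫ t : ℝ in Ioi 0, ((Real.log t * Real.exp (-t) : ℝ) : ℂ) :=
      setIntegral_congr_fun measurableSet_Ioi (fun t ht => by
        rw [sub_self, Complex.cpow_zero, one_mul]; push_cast; ring)
    rw [hd, heq]; exact integral_ofReal.symm
  have hev : Complex.Gamma =ᶠ[nhds (1:ℂ)] Complex.GammaIntegral := by
    filter_upwards [IsOpen.mem_nhds (isOpen_lt continuous_const Complex.continuous_re)
      (by norm_num : (0:ℝ) < (1:ℂ).re)] with s hs
    exact Complex.Gamma_eq_integral hs
  have hG : HasDerivAt Complex.Gamma ((d:ℂ)) 1 := h0'.congr_of_eventuallyEq hev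
  have hR : HasDerivAt (fun x : ℝ => (Complex.Gamma (x:ℂ)).re) ((d:ℂ)).re 1 := by
    exact_mod_cast hG.real_of_complex
  have hR' : HasDerivAt Real.Gamma d 1 := by
    simp only [Complex.Gamma_ofReal, Complex.ofReal_re] at hR
    exact hR
  have h1 := Real.hasDerivAt_Gamma_one
  have : d = -Real.eulerMascheroniConstant := hR'.unique h1
  linarith

lemma aux_int_exp_div {κ : ℝ} (hκ : 0 < κ) :
    IntegrableOn (fun u => Real.exp (-u) / u) (Ioi κ) := by
  refine Integrable.mono' ((exp_neg_integrableOn_Ioi κ one_pos).const_mul κ⁻¹) ?_ ?_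
  · exact ((Real.measurable_exp.comp measurable_neg).div measurable_id).aestronglyMeasurable
  · filter_upwards [ae_restrict_mem measurableSet_Ioi] with u hu
    have hu0 : 0 < u := lt_trans hκ hu
    calc ‖Real.exp (-u) / u‖ = Real.exp (-u) / u := by
          rw [Real.norm_eq_abs, abs_of_pos (div_pos (Real.exp_pos _) hu0)]
      _ ≤ Real.exp (-u) / κ :=
          div_le_div_of_nonneg_left (Real.exp_pos _).le hκ (le_of_lt hu)
      _ = κ⁻¹ * Real.exp (-1 * u) := by rw [neg_one_mul, div_eq_inv_mul]

lemma key_limit :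
    Tendsto (fun κ : ℝ => (∫ u in Ioi κ, Real.exp (-u) / u) + Real.log κ)
      (nhdsWithin 0 (Ioi 0)) (nhds (-Real.eulerMascheroniConstant)) := by
  have heq : ∀ κ ∈ Ioi (0:ℝ), (∫ u in Ioi κ, Real.exp (-u) / u) + Real.log κ
      = Real.log κ * (1 - Real.exp (-κ)) + ∫ u in Ioi κ, Real.log u * Real.exp (-u) := by
    intro κ hκ
    have hκ0 : (0:ℝ) < κ := hκ
    have hlogint : IntegrableOn (fun u => Real.log u * Real.exp (-u)) (Ioi κ) :=
      aux_int_log.mono_set (Ioi_subset_Ioi hκ0.le)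
    have hparts : (∫ u in Ioi κ, (Real.exp (-u)/u - Real.log u * Real.exp (-u)))
        = 0 - Real.log κ * Real.exp (-κ) := by
      refine integral_Ioi_of_hasDerivAt_of_tendsto
        (f := fun u : ℝ => Real.log u * Real.exp (-u))
        (f' := fun u : ℝ => Real.exp (-u)/u - Real.log u * Real.exp (-u))
        (m := 0) ?_ ?_ ?_ ?_
      · exact ((Real.continuousAt_log hκ0.ne').mul
          (Real.continuous_exp.continuousAt.comp continuous_neg.continuousAt)).continuousWithinAt
      · intro x hx
        have hx0 : 0 < x := lt_trans hκ0 hx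
        have h2 : HasDerivAt (fun u : ℝ => Real.exp (-u)) (-Real.exp (-x)) x := by
          simpa using (hasDerivAt_neg x).exp
        have h3 := (Real.hasDerivAt_log hx0.ne').mul h2
        refine h3.congr_deriv ?_
        ring
      · exact (aux_int_exp_div hκ0).sub hlogint
      · refine squeeze_zero_norm' (a := fun u : ℝ => u * Real.exp (-u)) ?_ ?_
        · filter_upwards [eventually_ge_atTop (1:ℝ)] with u hu
          have h0 : (0:ℝ) ≤ Real.log u := Real.log_nonneg hu
          have hlu : Real.log u ≤ u := by
            have := Real.log_le_sub_one_of_pos (by linarith : (0:ℝ) < u); linarith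
          rw [norm_mul, Real.norm_eq_abs, Real.norm_eq_abs, abs_of_nonneg h0,
            abs_of_pos (Real.exp_pos _)]
          exact mul_le_mul_of_nonneg_right hlu (Real.exp_pos _).le
        · simpa using Real.tendsto_pow_mul_exp_neg_atTop_nhds_zero 1
    have hsplit : (∫ u in Ioi κ, Real.exp (-u)/u)
        = (∫ u in Ioi κ, (Real.exp (-u)/u - Real.log u * Real.exp (-u)))
          + ∫ u in Ioi κ, Real.log u * Real.exp (-u) := by
      rw [integral_sub (aux_int_exp_div hκ0) hlogint]; ring
    rw [hsplit, hparts]; ring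
  have hlim1 : Tendsto (fun κ : ℝ => Real.log κ * (1 - Real.exp (-κ)))
      (nhdsWithin 0 (Ioi 0)) (nhds 0) := by
    have hg : Tendsto (fun κ : ℝ => |κ * Real.log κ|) (nhdsWithin 0 (Ioi 0)) (nhds 0) := by
      have h := Real.continuous_mul_log.tendsto 0
      simp only [Real.log_zero, mul_zero, zero_mul] at h
      have := (h.mono_left (nhdsWithin_le_nhds (s := Ioi (0:ℝ)))).abs
      simpa using this
    apply squeeze_zero_norm' ?_ hg
    filter_upwards [self_mem_nhdsWithin] with κ (hκ : 0 < κ)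
    have h1 : 1 - Real.exp (-κ) ≤ κ := by nlinarith [Real.add_one_le_exp (-κ)]
    have h2 : 0 ≤ 1 - Real.exp (-κ) := by
      have : Real.exp (-κ) ≤ 1 := Real.exp_le_one_iff.2 (by linarith)
      linarith
    rw [norm_mul, Real.norm_eq_abs, Real.norm_eq_abs, abs_of_nonneg h2, abs_mul,
      abs_of_pos hκ]
    calc |Real.log κ| * (1 - Real.exp (-κ)) ≤ |Real.log κ| * κ :=
          mul_le_mul_of_nonneg_left h1 (abs_nonneg _)
      _ = κ * |Real.log κ| := by ring
  have hmeas : Measurable (fun u : ℝ => Real.log u * Real.exp (-u)) :=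
    Real.measurable_log.mul (Real.measurable_exp.comp measurable_neg)
  have hDCT : Tendsto
      (fun κ : ℝ => ∫ u in Ioi (0:ℝ),
        (Ioi κ).indicator (fun u => Real.log u * Real.exp (-u)) u)
      (nhdsWithin 0 (Ioi 0)) (nhds (∫ u in Ioi (0:ℝ), Real.log u * Real.exp (-u))) := by
    refine tendsto_integral_filter_of_dominated_convergence
      (fun u => ‖Real.log u * Real.exp (-u)‖) ?_ ?_ aux_int_log.norm ?_
    · exact Eventually.of_forall
        (fun κ => (hmeas.indicator measurableSet_Ioi).aestronglyMeasurable)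
    · exact Eventually.of_forall (fun κ => Eventually.of_forall
        (fun u => norm_indicator_le_norm_self _ _))
    · filter_upwards [ae_restrict_mem measurableSet_Ioi] with u hu
      have hev : ∀ᶠ κ in nhdsWithin (0:ℝ) (Ioi 0),
          (Ioi κ).indicator (fun u => Real.log u * Real.exp (-u)) u
            = Real.log u * Real.exp (-u) := by
        filter_upwards [Ioo_mem_nhdsGT_of_mem (left_mem_Ico.2 hu)] with κ hκ
        exact indicator_of_mem (mem_Ioi.2 hκ.2) _
      exact Tendsto.congr' (hev.mono fun κ h => h.symm) tendsto_const_nhds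
  have hlim2 : Tendsto (fun κ : ℝ => ∫ u in Ioi κ, Real.log u * Real.exp (-u))
      (nhdsWithin 0 (Ioi 0)) (nhds (-Real.eulerMascheroniConstant)) := by
    rw [← int_log_exp]
    refine hDCT.congr' ?_
    filter_upwards [self_mem_nhdsWithin] with κ (hκ : 0 < κ)
    rw [setIntegral_indicator measurableSet_Ioi, Set.Ioi_inter_Ioi,
      max_eq_right (le_of_lt hκ)]
  have := hlim1.add hlim2
  rw [zero_add] at this
  apply Tendsto.congr' ?_ this
  filter_upwards [self_mem_nhdsWithin] with κ hκ
  exact (heq κ hκ).symm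

/-- Abstract asymptotic lemma behind Theorem 1.2(ii): if `S` is measurable on `(0,∞)`,
`|S t| ≤ C e^{-c/t}` for `t ∈ (0,1]` and `|S t - 1| ≤ C e^{-ct}` for `t ≥ 1`, then as
`κ → 0⁺`, `∫_0^∞ e^{-κt} S t / t dt + log κ` converges to
`∫_0^1 S t / t dt + ∫_1^∞ (S t - 1)/t dt - γ_EM`. -/
theorem stmt12 (S : ℝ → ℝ) (hS : Measurable ((Set.Ioi (0 : ℝ)).restrict S))
    (C c : ℝ) (hC : 0 < C) (hc : 0 < c)
    (h1 : ∀ t ∈ Set.Ioc (0 : ℝ) 1, |S t| ≤ C * Real.exp (-c / t))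
    (h2 : ∀ t : ℝ, 1 ≤ t → |S t - 1| ≤ C * Real.exp (-c * t)) :
    Tendsto
      (fun κ : ℝ => (∫ t in Set.Ioi (0 : ℝ), Real.exp (-κ * t) * S t / t) + Real.log κ)
      (nhdsWithin 0 (Set.Ioi 0))
      (nhds ((∫ t in Set.Ioo (0 : ℝ) 1, S t / t) + (∫ t in Set.Ioi (1 : ℝ), (S t - 1) / t) -
        Real.eulerMascheroniConstant)) := by
  -- measurability of S on subsets of (0, ∞)
  have hms : MeasurableSet (Ioi (0:ℝ)) := measurableSet_Ioi
  have hSm : AEStronglyMeasurable S (volume.restrict (Ioi (0:ℝ))) := by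
    rw [← map_comap_subtype_coe hms]
    exact ((MeasurableEmbedding.subtype_coe hms).aestronglyMeasurable_map_iff).2
      hS.aestronglyMeasurable
  have hSm' : ∀ s : Set ℝ, s ⊆ Ioi 0 → AEStronglyMeasurable S (volume.restrict s) :=
    fun s hs => hSm.mono_measure (Measure.restrict_mono hs le_rfl)
  -- uniform bound on (0,1)
  have hbound : ∀ κ : ℝ, 0 ≤ κ → ∀ t ∈ Ioo (0:ℝ) 1,
      ‖Real.exp (-κ*t) * S t / t‖ ≤ C / c := by
    intro κ hκ t ht
    have ht0 : 0 < t := ht.1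
    have hct : 0 < c / t := div_pos hc ht0
    have he : Real.exp (-c/t) ≤ t / c := by
      rw [show -c/t = -(c/t) by ring, Real.exp_neg]
      have h2' : c/t ≤ Real.exp (c/t) := by nlinarith [Real.add_one_le_exp (c/t)]
      calc (Real.exp (c/t))⁻¹ ≤ (c/t)⁻¹ := by
            exact inv_anti₀ hct h2'
        _ = t/c := by rw [inv_div]
    have hSt : |S t| ≤ C * (t/c) := by
      refine le_trans (h1 t ⟨ht.1, ht.2.le⟩) ?_
      exact mul_le_mul_of_nonneg_left he hC.le
    have hexp1 : Real.exp (-κ*t) ≤ 1 := by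
      rw [Real.exp_le_one_iff]
      nlinarith
    have habs : ‖Real.exp (-κ*t) * S t / t‖ = Real.exp (-κ*t) * |S t| / t := by
      rw [norm_div, norm_mul, Real.norm_eq_abs, Real.norm_eq_abs, Real.norm_eq_abs,
        abs_of_pos (Real.exp_pos _), abs_of_pos ht0]
    rw [habs, div_le_div_iff₀ ht0 hc]
    have h3 : |S t| * c ≤ C * t := by
      have := mul_le_mul_of_nonneg_right hSt hc.le
      calc |S t| * c ≤ C * (t/c) * c := this
        _ = C * t := by field_simp
    have h4 := mul_le_mul_of_nonneg_right
      (mul_le_mul_of_nonneg_right hexp1 (abs_nonneg (S t))) hc.le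
    rw [one_mul] at h4
    linarith
  -- uniform bound on (1,∞)
  have hbound2 : ∀ κ : ℝ, 0 ≤ κ → ∀ t ∈ Ioi (1:ℝ),
      ‖Real.exp (-κ*t) * (S t - 1) / t‖ ≤ C * Real.exp (-c*t) := by
    intro κ hκ t ht
    have ht1 : (1:ℝ) ≤ t := le_of_lt ht
    have ht0 : (0:ℝ) < t := lt_of_lt_of_le zero_lt_one ht1
    have hexp1 : Real.exp (-κ*t) ≤ 1 := by
      rw [Real.exp_le_one_iff]; nlinarith
    have habs : ‖Real.exp (-κ*t) * (S t - 1) / t‖ = Real.exp (-κ*t) * |S t - 1| / t := by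
      rw [norm_div, norm_mul, Real.norm_eq_abs, Real.norm_eq_abs, Real.norm_eq_abs,
        abs_of_pos (Real.exp_pos _), abs_of_pos ht0]
    rw [habs]
    calc Real.exp (-κ*t) * |S t - 1| / t ≤ Real.exp (-κ*t) * |S t - 1| / 1 := by
          apply div_le_div_of_nonneg_left ?_ ?_ ht1 <;> positivity
      _ = Real.exp (-κ*t) * |S t - 1| := by rw [div_one]
      _ ≤ 1 * |S t - 1| := mul_le_mul_of_nonneg_right hexp1 (abs_nonneg _)
      _ = |S t - 1| := one_mul _
      _ ≤ C * Real.exp (-c*t) := h2 t ht1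
  -- integrability of dominating functions
  have hconst_int : IntegrableOn (fun _ : ℝ => C / c) (Ioo (0:ℝ) 1) :=
    integrableOn_const measure_Ioo_lt_top.ne enorm_ne_top
  have hexp_int : IntegrableOn (fun t : ℝ => C * Real.exp (-c*t)) (Ioi (1:ℝ)) :=
    (exp_neg_integrableOn_Ioi 1 hc).const_mul C
  -- a.e. measurability of integrands
  have hmeas1 : ∀ κ : ℝ, AEStronglyMeasurable (fun t => Real.exp (-κ*t) * S t / t)
      (volume.restrict (Ioo (0:ℝ) 1)) := by
    intro κ
    have m1 : Measurable (fun t : ℝ => Real.exp (-κ*t)) :=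
      Real.measurable_exp.comp (measurable_id.const_mul (-κ))
    have m2 : AEStronglyMeasurable (fun t : ℝ => Real.exp (-κ*t) * S t)
        (volume.restrict (Ioo (0:ℝ) 1)) :=
      m1.aestronglyMeasurable.mul (hSm' _ Ioo_subset_Ioi_self)
    simp_rw [div_eq_mul_inv]
    exact m2.mul (measurable_inv.comp measurable_id).aestronglyMeasurable
  have hmeas2 : ∀ κ : ℝ, AEStronglyMeasurable (fun t => Real.exp (-κ*t) * (S t - 1) / t)
      (volume.restrict (Ioi (1:ℝ))) := by
    intro κ
    have hsub : Ioi (1:ℝ) ⊆ Ioi 0 := Ioi_subset_Ioi zero_le_one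
    have m1 : Measurable (fun t : ℝ => Real.exp (-κ*t)) :=
      Real.measurable_exp.comp (measurable_id.const_mul (-κ))
    have m2 : AEStronglyMeasurable (fun t : ℝ => Real.exp (-κ*t) * (S t - 1))
        (volume.restrict (Ioi (1:ℝ))) :=
      m1.aestronglyMeasurable.mul ((hSm' _ hsub).sub aestronglyMeasurable_const)
    simp_rw [div_eq_mul_inv]
    exact m2.mul (measurable_inv.comp measurable_id).aestronglyMeasurable
  -- limit A on (0,1)
  have hA : Tendsto (fun κ : ℝ => ∫ t in Ioo (0:ℝ) 1, Real.exp (-κ*t) * S t / t)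
      (nhdsWithin 0 (Ioi 0)) (nhds (∫ t in Ioo (0:ℝ) 1, S t / t)) := by
    refine tendsto_integral_filter_of_dominated_convergence (fun _ => C / c)
      (Eventually.of_forall hmeas1) ?_ hconst_int ?_
    · filter_upwards [self_mem_nhdsWithin] with κ (hκ : 0 < κ)
      filter_upwards [ae_restrict_mem measurableSet_Ioo] with t ht
      exact hbound κ hκ.le t ht
    · filter_upwards [ae_restrict_mem measurableSet_Ioo] with t ht
      have hcont : Continuous fun κ : ℝ => Real.exp (-κ*t) * S t / t := by
        apply Continuous.div_const
        exact (Real.continuous_exp.comp ((continuous_id.neg).mul continuous_const)).mul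
          continuous_const
      have := (hcont.tendsto 0).mono_left (nhdsWithin_le_nhds (s := Ioi (0:ℝ)))
      simpa using this
  -- limit B on (1,∞)
  have hB : Tendsto (fun κ : ℝ => ∫ t in Ioi (1:ℝ), Real.exp (-κ*t) * (S t - 1) / t)
      (nhdsWithin 0 (Ioi 0)) (nhds (∫ t in Ioi (1:ℝ), (S t - 1) / t)) := by
    refine tendsto_integral_filter_of_dominated_convergence (fun t => C * Real.exp (-c*t))
      (Eventually.of_forall hmeas2) ?_ hexp_int ?_
    · filter_upwards [self_mem_nhdsWithin] with κ (hκ : 0 < κ)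
      filter_upwards [ae_restrict_mem measurableSet_Ioi] with t ht
      exact hbound2 κ hκ.le t ht
    · filter_upwards [ae_restrict_mem measurableSet_Ioi] with t ht
      have hcont : Continuous fun κ : ℝ => Real.exp (-κ*t) * (S t - 1) / t := by
        apply Continuous.div_const
        exact (Real.continuous_exp.comp ((continuous_id.neg).mul continuous_const)).mul
          continuous_const
      have := (hcont.tendsto 0).mono_left (nhdsWithin_le_nhds (s := Ioi (0:ℝ)))
      simpa using this
  -- limit H on (1,∞): exponential integral asymptotics
  have hH : Tendsto (fun κ : ℝ => (∫ t in Ioi (1:ℝ), Real.exp (-κ*t) / t) + Real.log κ)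
      (nhdsWithin 0 (Ioi 0)) (nhds (-Real.eulerMascheroniConstant)) := by
    refine key_limit.congr' ?_
    filter_upwards [self_mem_nhdsWithin] with κ (hκ : 0 < κ)
    have hsub : (∫ u in Ioi κ, Real.exp (-u)/u) = ∫ t in Ioi (1:ℝ), Real.exp (-κ*t)/t := by
      have h := integral_comp_mul_left_Ioi (g := fun u => Real.exp (-u)/u) (a := 1) hκ
      have h2 : (∫ x in Ioi (1:ℝ), Real.exp (-(κ*x))/(κ*x))
          = κ⁻¹ * ∫ x in Ioi (1:ℝ), Real.exp (-κ*x)/x := by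
        rw [← integral_const_mul]
        refine setIntegral_congr_fun measurableSet_Ioi fun x hx => ?_
        rw [show -κ*x = -(κ*x) from neg_mul κ x]
        ring
      rw [h2, mul_one, smul_eq_mul] at h
      have := mul_left_cancel₀ (inv_ne_zero hκ.ne') h
      exact this.symm
    rw [hsub]
  -- splitting of the full integral, eventually in κ
  have hsplit : ∀ᶠ κ in nhdsWithin (0:ℝ) (Ioi 0),
      (∫ t in Ioi (0:ℝ), Real.exp (-κ*t) * S t / t) + Real.log κ
        = (∫ t in Ioo (0:ℝ) 1, Real.exp (-κ*t) * S t / t)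
          + (∫ t in Ioi (1:ℝ), Real.exp (-κ*t) * (S t - 1) / t)
          + ((∫ t in Ioi (1:ℝ), Real.exp (-κ*t) / t) + Real.log κ) := by
    filter_upwards [self_mem_nhdsWithin] with κ (hκ : 0 < κ)
    have hI1 : IntegrableOn (fun t => Real.exp (-κ*t) * S t / t) (Ioo (0:ℝ) 1) := by
      refine Integrable.mono' hconst_int (hmeas1 κ) ?_
      filter_upwards [ae_restrict_mem measurableSet_Ioo] with t ht
      exact hbound κ hκ.le t ht
    have hI2 : IntegrableOn (fun t => Real.exp (-κ*t) * (S t - 1) / t) (Ioi (1:ℝ)) := by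
      refine Integrable.mono' hexp_int (hmeas2 κ) ?_
      filter_upwards [ae_restrict_mem measurableSet_Ioi] with t ht
      exact hbound2 κ hκ.le t ht
    have hI3 : IntegrableOn (fun t => Real.exp (-κ*t) / t) (Ioi (1:ℝ)) := by
      refine Integrable.mono' (exp_neg_integrableOn_Ioi 1 hκ) ?_ ?_
      · exact ((Real.measurable_exp.comp (measurable_id.const_mul (-κ))).div
          measurable_id).aestronglyMeasurable
      · filter_upwards [ae_restrict_mem measurableSet_Ioi] with t ht
        have ht0 : (0:ℝ) < t := lt_trans zero_lt_one ht
        rw [Real.norm_eq_abs, abs_of_pos (div_pos (Real.exp_pos _) ht0)]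
        calc Real.exp (-κ*t) / t ≤ Real.exp (-κ*t) / 1 :=
              div_le_div_of_nonneg_left (Real.exp_pos _).le zero_lt_one (le_of_lt ht)
          _ = Real.exp (-κ*t) := div_one _
    have heqIoi1 : ∀ t ∈ Ioi (1:ℝ), Real.exp (-κ*t) * S t / t
        = Real.exp (-κ*t) * (S t - 1) / t + Real.exp (-κ*t) / t := by
      intro t ht; ring
    have hIoi1 : IntegrableOn (fun t => Real.exp (-κ*t) * S t / t) (Ioi (1:ℝ)) := by
      refine (hI2.add hI3).congr ?_
      filter_upwards [ae_restrict_mem measurableSet_Ioi] with t ht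
      exact (heqIoi1 t ht).symm
    have hunion : Ioo (0:ℝ) 1 ∪ Ici 1 = Ioi 0 := Ioo_union_Ici_eq_Ioi zero_lt_one
    have hdisj : Disjoint (Ioo (0:ℝ) 1) (Ici 1) := by
      rw [Set.disjoint_left]
      intro x hx hx'
      exact absurd hx.2 (not_lt.2 hx')
    have hIci : IntegrableOn (fun t => Real.exp (-κ*t) * S t / t) (Ici (1:ℝ)) := by
      rwa [integrableOn_Ici_iff_integrableOn_Ioi]
    have hmain : (∫ t in Ioi (0:ℝ), Real.exp (-κ*t) * S t / t)
        = (∫ t in Ioo (0:ℝ) 1, Real.exp (-κ*t) * S t / t)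
          + ∫ t in Ici (1:ℝ), Real.exp (-κ*t) * S t / t := by
      rw [← hunion]
      exact setIntegral_union hdisj measurableSet_Ici hI1 hIci
    have hIci' : (∫ t in Ici (1:ℝ), Real.exp (-κ*t) * S t / t)
        = ∫ t in Ioi (1:ℝ), Real.exp (-κ*t) * S t / t := integral_Ici_eq_integral_Ioi
    have hsum : (∫ t in Ioi (1:ℝ), Real.exp (-κ*t) * S t / t)
        = (∫ t in Ioi (1:ℝ), Real.exp (-κ*t) * (S t - 1) / t)
          + ∫ t in Ioi (1:ℝ), Real.exp (-κ*t) / t := by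
      rw [← integral_add hI2 hI3]
      exact setIntegral_congr_fun measurableSet_Ioi heqIoi1
    rw [hmain, hIci', hsum]
    ring
  -- assemble
  have htot := (hA.add hB).add hH
  have hfinal : (∫ t in Ioo (0:ℝ) 1, S t / t) + (∫ t in Ioi (1:ℝ), (S t - 1) / t)
      - Real.eulerMascheroniConstant
      = (∫ t in Ioo (0:ℝ) 1, S t / t) + (∫ t in Ioi (1:ℝ), (S t - 1) / t)
        + -Real.eulerMascheroniConstant := by ring
  rw [hfinal]
  exact Tendsto.congr' (hsplit.mono fun κ h => h.symm) htot
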